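/- Let M be a metric space, y ∈ M, r ∈ (0,1], and let δ = ρ(y, M \ B(y, r/2)) with M \ B(y,r/2) nonempty. Define f(x) = max(min(δ,1) − ρ(x,y), 0). Then the Lipschitz constant of f satisfies lip(f) ≥ min(1, 1/δ), i.e., for every ε > 0 there exist points x, z ∈ M with x ≠ z and |f(x) − f(z)| ≥ (min(1,1/δ) − ε)·ρ(x,z). -/
import Mathlib


theorem stmt_1 {M : Type*} [MetricSpace M] (y : M) (r : ℝ) (hr : 0 < r) (hr1 : r ≤ 1)
    (hne : ((Metric.ball y (r / 2))ᶜ : Set M).Nonempty) :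
    ∀ ε > (0 : ℝ), ∃ x z : M, x ≠ z ∧
      |max (min (Metric.infDist y ((Metric.ball y (r / 2))ᶜ : Set M)) 1 - dist x y) 0 -
        max (min (Metric.infDist y ((Metric.ball y (r / 2))ᶜ : Set M)) 1 - dist z y) 0| ≥
      (min 1 (1 / Metric.infDist y ((Metric.ball y (r / 2))ᶜ : Set M)) - ε) * dist x z := by
  set S : Set M := (Metric.ball y (r / 2))ᶜ with hS
  set δ : ℝ := Metric.infDist y S with hδdef
  have hδpos : 0 < δ := by
    have : r / 2 ≤ δ := by
      by_contra hlt
      push_neg at hlt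
      obtain ⟨z, hz, hzd⟩ := (Metric.infDist_lt_iff hne).mp hlt
      have : ¬ dist z y < r / 2 := by
        simpa [hS, Metric.mem_ball] using hz
      rw [dist_comm] at hzd
      exact this hzd
    linarith
  set c : ℝ := min 1 (1 / δ) with hcdef
  have hcpos : 0 < c := lt_min one_pos (by positivity)
  have hmin : min δ 1 = δ * c := by
    rcases le_total δ 1 with h | h
    · have h1 : (1:ℝ) ≤ 1 / δ := (le_div_iff₀ hδpos).mpr (by linarith)
      rw [hcdef, min_eq_left h1, min_eq_left h, mul_one]
    · have h1 : 1 / δ ≤ (1:ℝ) := (div_le_one hδpos).mpr h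
      rw [hcdef, min_eq_right h1, min_eq_right h]
      field_simp
  intro ε hε
  by_cases hce : c ≤ ε
  · obtain ⟨z, hz⟩ := hne
    have hd : r / 2 ≤ dist z y := by
      simpa [hS, Metric.mem_ball, not_lt] using hz
    have hxz : y ≠ z := by
      intro h; rw [h] at hd; simp at hd; linarith
    refine ⟨y, z, hxz, ?_⟩
    have : (c - ε) * dist y z ≤ 0 :=
      mul_nonpos_of_nonpos_of_nonneg (by linarith) dist_nonneg
    calc (c - ε) * dist y z ≤ 0 := this
      _ ≤ _ := abs_nonneg _
  · push_neg at hce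
    have hb : δ < c * δ / (c - ε) := by
      rw [lt_div_iff₀ (by linarith)]
      nlinarith
    obtain ⟨z, hz, hzd⟩ := (Metric.infDist_lt_iff hne).mp (by rw [← hδdef]; exact hb)
    have hδz : δ ≤ dist y z := Metric.infDist_le_dist_of_mem hz
    have hxz : y ≠ z := by
      intro h; rw [h] at hδz; simp at hδz; linarith
    refine ⟨y, z, hxz, ?_⟩
    have h1 : max (min δ 1 - dist y y) 0 = min δ 1 := by
      simp [le_min hδpos.le zero_le_one]
    have h2 : max (min δ 1 - dist z y) 0 = 0 := by
      apply max_eq_right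
      have : min δ 1 ≤ dist z y := le_trans (min_le_left _ _) (by rw [dist_comm]; exact hδz)
      linarith
    rw [h1, h2, sub_zero, abs_of_nonneg (le_min hδpos.le zero_le_one), hmin]
    have : (c - ε) * dist y z < δ * c := by
      have := (mul_lt_mul_of_pos_left hzd (by linarith : (0:ℝ) < c - ε))
      rw [mul_div_cancel₀ _ (by linarith : c - ε ≠ 0)] at this
      linarith [this]
    linarith
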